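/- For any two numerical semigroups S_1 and S_2 (each with some non-uniquely-factorable element), there exist infinitely many pairs (λ, μ) with λ ∈ S_1 a non-atom, μ ∈ S_2 a non-atom, gcd(λ, μ) = 1, such that the gluing S = μS_1 + λS_2 is tasty: LD(S) > 1/max Δ(S). -/

import Mathlib

open Finset

namespace LengthDensity

/-- The set of factorizations of `n` with respect to generators `g`. -/
def facs {k : ℕ} (g : Fin k → ℕ) (n : ℕ) : Set (Fin k → ℕ) :=
  {z | ∑ i, z i * g i = n}

/-- Membership in the numerical semigroup generated by `g`. -/
def mem {k : ℕ} (g : Fin k → ℕ) (n : ℕ) : Prop := (facs g n).Nonempty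

/-- The set of factorization lengths of `n`. -/
def lengthSet {k : ℕ} (g : Fin k → ℕ) (n : ℕ) : Set ℕ :=
  (fun z => ∑ i, z i) '' facs g n

/-- Length density of an element. -/
noncomputable def LD {k : ℕ} (g : Fin k → ℕ) (n : ℕ) : ℝ :=
  (((lengthSet g n).ncard : ℝ) - 1) /
    (((sSup (lengthSet g n) : ℕ) : ℝ) - ((sInf (lengthSet g n) : ℕ) : ℝ))

/-- Length density of the semigroup: infimum of `LD` over elements with
non-singleton length set. -/
noncomputable def LDsgp {k : ℕ} (g : Fin k → ℕ) : ℝ :=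
  sInf {x : ℝ | ∃ n : ℕ, 2 ≤ (lengthSet g n).ncard ∧ x = LD g n}

/-- The delta set (successive gaps) of a set of naturals. -/
def deltaOf (L : Set ℕ) : Set ℕ :=
  {d | ∃ a ∈ L, ∃ b ∈ L, a < b ∧ (∀ c ∈ L, ¬(a < c ∧ c < b)) ∧ d = b - a}

/-- The delta set of an element. -/
def delta {k : ℕ} (g : Fin k → ℕ) (n : ℕ) : Set ℕ := deltaOf (lengthSet g n)

/-- The delta set of the semigroup. -/
def Delta {k : ℕ} (g : Fin k → ℕ) : Set ℕ := ⋃ n : ℕ, delta g n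

/-- Adjacency in the factorization graph of `n`: two factorizations of `n`
sharing a positive coordinate. -/
def adj {k : ℕ} (g : Fin k → ℕ) (n : ℕ) (z z' : Fin k → ℕ) : Prop :=
  z ∈ facs g n ∧ z' ∈ facs g n ∧ ∃ i, 0 < z i ∧ 0 < z' i

/-- `n` is a Betti element: its factorization graph is disconnected. -/
def IsBetti {k : ℕ} (g : Fin k → ℕ) (n : ℕ) : Prop :=
  ∃ z ∈ facs g n, ∃ z' ∈ facs g n, ¬ Relation.ReflTransGen (adj g n) z z'

/-- The semigroup is tasty: `LD(S) > 1 / max Δ(S)`. -/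
def Tasty {k : ℕ} (g : Fin k → ℕ) : Prop := LDsgp g > 1 / ((sSup (Delta g) : ℕ) : ℝ)

/-- The semigroup is bland: `LD(S) = 1 / max Δ(S)`. -/
def Bland {k : ℕ} (g : Fin k → ℕ) : Prop := LDsgp g = 1 / ((sSup (Delta g) : ℕ) : ℝ)

/-- `g` is a minimal generating set: no generator is a nonnegative integer
combination of the others. -/
def IsMinGen {k : ℕ} (g : Fin k → ℕ) : Prop :=
  ∀ i, ¬ ∃ z : Fin k → ℕ, z i = 0 ∧ ∑ j, z j * g j = g i

/-- `n` is a non-atom of the semigroup generated by `g`: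
it is a sum of two nonzero elements. -/
def NonAtom {k : ℕ} (g : Fin k → ℕ) (n : ℕ) : Prop :=
  ∃ a b : ℕ, 0 < a ∧ 0 < b ∧ mem g a ∧ mem g b ∧ n = a + b

lemma mem_zero {k : ℕ} (g : Fin k → ℕ) : mem g 0 :=
  ⟨fun _ => 0, by simp [facs]⟩

lemma mem_gen {k : ℕ} (g : Fin k → ℕ) (i : Fin k) : mem g (g i) :=
  ⟨fun j => if j = i then 1 else 0, by simp [facs]⟩

lemma facs_add {k : ℕ} {g : Fin k → ℕ} {a b : ℕ} {z w : Fin k → ℕ}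
    (hz : z ∈ facs g a) (hw : w ∈ facs g b) : (z + w) ∈ facs g (a + b) := by
  simp only [facs, Set.mem_setOf_eq] at *
  simp [add_mul, Finset.sum_add_distrib, hz, hw]

lemma mem_add {k : ℕ} {g : Fin k → ℕ} {a b : ℕ} (ha : mem g a) (hb : mem g b) :
    mem g (a + b) := by
  obtain ⟨z, hz⟩ := ha; obtain ⟨w, hw⟩ := hb
  exact ⟨z + w, facs_add hz hw⟩

lemma mem_mul_gen {k : ℕ} (g : Fin k → ℕ) (c : ℕ) (i : Fin k) : mem g (c * g i) :=
  ⟨fun j => if j = i then c else 0, by simp [facs]⟩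

lemma mem_smul {k : ℕ} {g : Fin k → ℕ} {a : ℕ} (c : ℕ) (ha : mem g a) : mem g (c * a) := by
  induction c with
  | zero => simpa using mem_zero g
  | succ c ih => rw [Nat.succ_mul]; exact mem_add ih ha

lemma length_add {k : ℕ} {g : Fin k → ℕ} {a b ℓ₁ ℓ₂ : ℕ}
    (h1 : ℓ₁ ∈ lengthSet g a) (h2 : ℓ₂ ∈ lengthSet g b) :
    ℓ₁ + ℓ₂ ∈ lengthSet g (a + b) := by
  obtain ⟨z, hz, rfl⟩ := h1; obtain ⟨w, hw, rfl⟩ := h2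
  exact ⟨z + w, facs_add hz hw, by simp [Finset.sum_add_distrib]⟩

lemma lengthSet_nonempty {k : ℕ} {g : Fin k → ℕ} {n : ℕ} (h : mem g n) :
    (lengthSet g n).Nonempty := h.image _

lemma mem_of_lengthSet {k : ℕ} {g : Fin k → ℕ} {n ℓ : ℕ} (h : ℓ ∈ lengthSet g n) :
    mem g n := by obtain ⟨z, hz, _⟩ := h; exact ⟨z, hz⟩

lemma length_le {k : ℕ} {g : Fin k → ℕ} (hg : ∀ i, 0 < g i) {n ℓ : ℕ}
    (h : ℓ ∈ lengthSet g n) : ℓ ≤ n := by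
  obtain ⟨z, hz, rfl⟩ := h
  calc ∑ i, z i ≤ ∑ i, z i * g i := Finset.sum_le_sum fun i _ => Nat.le_mul_of_pos_right _ (hg i)
  _ = n := hz

lemma lengthSet_finite {k : ℕ} {g : Fin k → ℕ} (hg : ∀ i, 0 < g i) (n : ℕ) :
    (lengthSet g n).Finite :=
  Set.Finite.subset (Set.finite_Iic n) (fun _ h => length_le hg h)

lemma length_lower {k : ℕ} {g : Fin k → ℕ} {c : ℕ} (hc : ∀ i, c ≤ g i) {n ℓ : ℕ}
    (h : ℓ ∈ lengthSet g n) : c * ℓ ≤ n := by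
  obtain ⟨z, hz, rfl⟩ := h
  calc c * ∑ i, z i = ∑ i, z i * c := by rw [Finset.mul_sum]; exact Finset.sum_congr rfl (by intros; ring)
  _ ≤ ∑ i, z i * g i := Finset.sum_le_sum fun i _ => Nat.mul_le_mul_left _ (hc i)
  _ = n := hz

lemma length_upper {k : ℕ} {g : Fin k → ℕ} {n ℓ : ℕ} (h : ℓ ∈ lengthSet g n) :
    n ≤ ℓ * Finset.univ.sup g := by
  obtain ⟨z, hz, rfl⟩ := h
  calc n = ∑ i, z i * g i := hz.symm
  _ ≤ ∑ i, z i * Finset.univ.sup g :=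
    Finset.sum_le_sum fun i _ => Nat.mul_le_mul_left _ (Finset.le_sup (Finset.mem_univ i))
  _ = (∑ i, z i) * Finset.univ.sup g := by rw [Finset.sum_mul]

lemma lengthSet_zero {k : ℕ} {g : Fin k → ℕ} (hg : ∀ i, 0 < g i) :
    lengthSet g 0 = {0} := by
  ext ℓ
  simp only [Set.mem_singleton_iff]
  constructor
  · intro h; have := length_le hg h; omega
  · rintro rfl; exact ⟨fun _ => 0, by simp [facs], by simp⟩


/-- Gap bound: above any non-maximal length there is another length within `k * sup g`. -/
lemma exists_length_above {k : ℕ} {g : Fin k → ℕ} (hk : 0 < k) (hg : ∀ i, 0 < g i)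
    {n ℓ ℓ' : ℕ} (h1 : ℓ ∈ lengthSet g n) (h2 : ℓ' ∈ lengthSet g n) (hlt : ℓ < ℓ') :
    ∃ ℓ'', ℓ'' ∈ lengthSet g n ∧ ℓ < ℓ'' ∧ ℓ'' ≤ ℓ + k * Finset.univ.sup g := by
  obtain ⟨i₀, -, hi₀⟩ := Finset.exists_min_image Finset.univ g
    (Finset.univ_nonempty_iff.mpr (Fin.pos_iff_nonempty.mp hk))
  obtain ⟨z, hz, hzl⟩ := h1
  replace hzl : ∑ j, z j = ℓ := hzl
  replace hz : ∑ j, z j * g j = n := hz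
  by_cases H : ∃ i, g i₀ < g i ∧ g i₀ ≤ z i
  · obtain ⟨i, hgi, hzi⟩ := H
    have hne : i ≠ i₀ := by intro h; rw [h] at hgi; omega
    have hsplit : ∀ (w : Fin k → ℕ),
        ∑ j, w j = w i + (w i₀ + ∑ j ∈ (Finset.univ.erase i).erase i₀, w j) := by
      intro w
      rw [← Finset.add_sum_erase _ _ (Finset.mem_univ i)]
      rw [← Finset.add_sum_erase _ _ (Finset.mem_erase.mpr ⟨Ne.symm hne, Finset.mem_univ i₀⟩)]
    have hfac : (fun j => if j = i then z i - g i₀ else if j = i₀ then z i₀ + g i else z j)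
        ∈ facs g n := by
      show (∑ j, (if j = i then z i - g i₀ else if j = i₀ then z i₀ + g i else z j) * g j) = n
      rw [hsplit (fun j => (if j = i then z i - g i₀ else if j = i₀ then z i₀ + g i else z j) * g j)]
      rw [hsplit (fun j => z j * g j)] at hz
      have e1 : (if i = i then z i - g i₀ else if i = i₀ then z i₀ + g i else z i) = z i - g i₀ := by
        simp
      have e2 : (if i₀ = i then z i - g i₀ else if i₀ = i₀ then z i₀ + g i else z i₀) = z i₀ + g i := by
        simp [Ne.symm hne]
      rw [e1, e2]
      have hcong : ∑ j ∈ (Finset.univ.erase i).erase i₀,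
          (if j = i then z i - g i₀ else if j = i₀ then z i₀ + g i else z j) * g j
          = ∑ j ∈ (Finset.univ.erase i).erase i₀, z j * g j := by
        apply Finset.sum_congr rfl
        intro j hj
        simp only [Finset.mem_erase] at hj
        simp [hj.1, hj.2.1]
      rw [hcong, Nat.sub_mul, Nat.add_mul]
      have hcomm : g i₀ * g i = g i * g i₀ := Nat.mul_comm _ _
      have hple : g i₀ * g i ≤ z i * g i := Nat.mul_le_mul_right _ hzi
      omega
    have hlen : (∑ j, (if j = i then z i - g i₀ else if j = i₀ then z i₀ + g i else z j))
        = ℓ + (g i - g i₀) := by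
      rw [hsplit (fun j => (if j = i then z i - g i₀ else if j = i₀ then z i₀ + g i else z j))]
      rw [hsplit z] at hzl
      have e1 : (if i = i then z i - g i₀ else if i = i₀ then z i₀ + g i else z i) = z i - g i₀ := by
        simp
      have e2 : (if i₀ = i then z i - g i₀ else if i₀ = i₀ then z i₀ + g i else z i₀) = z i₀ + g i := by
        simp [Ne.symm hne]
      rw [e1, e2]
      have hcong : ∑ j ∈ (Finset.univ.erase i).erase i₀,
          (if j = i then z i - g i₀ else if j = i₀ then z i₀ + g i else z j)
          = ∑ j ∈ (Finset.univ.erase i).erase i₀, z j := by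
        apply Finset.sum_congr rfl
        intro j hj
        simp only [Finset.mem_erase] at hj
        simp [hj.1, hj.2.1]
      rw [hcong]
      omega
    refine ⟨ℓ + (g i - g i₀), ⟨_, hfac, hlen⟩, by omega, ?_⟩
    have h1 : g i ≤ Finset.univ.sup g := Finset.le_sup (Finset.mem_univ i)
    have h2 : 1 * Finset.univ.sup g ≤ k * Finset.univ.sup g := Nat.mul_le_mul_right _ hk
    omega
  · push_neg at H
    refine ⟨ℓ', h2, hlt, ?_⟩
    have hub : n ≤ g i₀ * (∑ j, g j) + g i₀ * ℓ := by
      have hterm : ∀ j ∈ Finset.univ, z j * g j ≤ g i₀ * g j + z j * g i₀ := by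
        intro j _
        rcases Nat.lt_or_ge (g i₀) (g j) with h | h
        · have hzj := H j h
          have : z j * g j ≤ g i₀ * g j := Nat.mul_le_mul_right _ (by omega)
          omega
        · have hpj : g j = g i₀ := le_antisymm h (hi₀ j (Finset.mem_univ j))
          rw [hpj]; omega
      calc n = ∑ j, z j * g j := hz.symm
      _ ≤ ∑ j, (g i₀ * g j + z j * g i₀) := Finset.sum_le_sum hterm
      _ = g i₀ * (∑ j, g j) + (∑ j, z j) * g i₀ := by
          rw [Finset.sum_add_distrib, Finset.mul_sum, Finset.sum_mul]
      _ = g i₀ * (∑ j, g j) + g i₀ * ℓ := by rw [hzl]; ring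
    have hlb : g i₀ * ℓ' ≤ n := length_lower (fun i => hi₀ i (Finset.mem_univ i)) h2
    have hsum : (∑ j, g j) ≤ k * Finset.univ.sup g := by
      calc (∑ j, g j) ≤ ∑ _j : Fin k, Finset.univ.sup g :=
        Finset.sum_le_sum fun j _ => Finset.le_sup (Finset.mem_univ j)
      _ = k * Finset.univ.sup g := by
          rw [Finset.sum_const, Finset.card_univ, Fintype.card_fin, smul_eq_mul]
    have hp0 : 0 < g i₀ := hg i₀
    have hchain : g i₀ * ℓ' ≤ g i₀ * (k * Finset.univ.sup g + ℓ) := by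
      have h3 := Nat.mul_le_mul_left (g i₀) hsum
      rw [Nat.mul_add]
      omega
    have := Nat.le_of_mul_le_mul_left hchain hp0
    omega

/-- Below any non-minimal length there is another length within `k * sup g`. -/
lemma exists_length_below {k : ℕ} {g : Fin k → ℕ} (hk : 0 < k) (hg : ∀ i, 0 < g i)
    {n ℓ₀ ℓ : ℕ} (h1 : ℓ₀ ∈ lengthSet g n) (h2 : ℓ ∈ lengthSet g n) (hlt : ℓ₀ < ℓ) :
    ∃ ℓ', ℓ' ∈ lengthSet g n ∧ ℓ' < ℓ ∧ ℓ ≤ ℓ' + k * Finset.univ.sup g := by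
  have hSne : ({c | c ∈ lengthSet g n ∧ c < ℓ} : Set ℕ).Nonempty := ⟨ℓ₀, h1, hlt⟩
  have hSbdd : BddAbove {c | c ∈ lengthSet g n ∧ c < ℓ} := ⟨ℓ, fun c hc => le_of_lt hc.2⟩
  have hmem := Nat.sSup_mem hSne hSbdd
  obtain ⟨hmem1, hmem2⟩ := hmem
  obtain ⟨ℓ'', h3, h4, h5⟩ := exists_length_above hk hg hmem1 h2 hmem2
  have hnot : ¬ (ℓ'' < ℓ) := by
    intro hcon
    have : ℓ'' ≤ sSup {c | c ∈ lengthSet g n ∧ c < ℓ} := le_csSup hSbdd ⟨h3, hcon⟩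
    omega
  exact ⟨_, hmem1, hmem2, by omega⟩


section Glue

variable {r₁ r₂ : ℕ} (g1 : Fin r₁ → ℕ) (g2 : Fin r₂ → ℕ) (lam mu : ℕ)

/-- Lengths in a gluing decompose along representations. -/
lemma glue_length_iff (n ℓ : ℕ) :
    ℓ ∈ lengthSet (Fin.append (fun i => mu * g1 i) (fun j => lam * g2 j)) n ↔
      ∃ a b ℓ₁ ℓ₂, mu * a + lam * b = n ∧ ℓ₁ ∈ lengthSet g1 a ∧ ℓ₂ ∈ lengthSet g2 b ∧
        ℓ = ℓ₁ + ℓ₂ := by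
  constructor
  · rintro ⟨z, hz, rfl⟩
    replace hz : ∑ i, z i * Fin.append (fun i => mu * g1 i) (fun j => lam * g2 j) i = n := hz
    rw [Fin.sum_univ_add (f := fun i => z i * Fin.append (fun i => mu * g1 i) (fun j => lam * g2 j) i)] at hz
    simp only [Fin.append_left, Fin.append_right] at hz
    refine ⟨∑ i, z (Fin.castAdd r₂ i) * g1 i, ∑ j, z (Fin.natAdd r₁ j) * g2 j,
      ∑ i, z (Fin.castAdd r₂ i), ∑ j, z (Fin.natAdd r₁ j),
      ?_, ⟨_, rfl, rfl⟩, ⟨_, rfl, rfl⟩, ?_⟩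
    · rw [← hz, Finset.mul_sum, Finset.mul_sum]
      congr 1
      · exact Finset.sum_congr rfl fun i _ => by ring
      · exact Finset.sum_congr rfl fun j _ => by ring
    · show ∑ i, z i = _
      rw [Fin.sum_univ_add (f := fun i => z i)]
  · rintro ⟨a, b, ℓ₁, ℓ₂, hab, ⟨x, hx, rfl⟩, ⟨y, hy, rfl⟩, rfl⟩
    replace hx : ∑ i, x i * g1 i = a := hx
    replace hy : ∑ j, y j * g2 j = b := hy
    refine ⟨Fin.append x y, ?_, ?_⟩
    · show ∑ i, Fin.append x y i * Fin.append (fun i => mu * g1 i) (fun j => lam * g2 j) i = n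
      rw [Fin.sum_univ_add (f := fun i => Fin.append x y i * Fin.append (fun i => mu * g1 i) (fun j => lam * g2 j) i)]
      simp only [Fin.append_left, Fin.append_right]
      rw [← hab, ← hx, ← hy, Finset.mul_sum, Finset.mul_sum]
      congr 1
      · exact Finset.sum_congr rfl fun i _ => by ring
      · exact Finset.sum_congr rfl fun j _ => by ring
    · show ∑ i, Fin.append x y i = _
      rw [Fin.sum_univ_add (f := fun i => Fin.append x y i)]
      simp only [Fin.append_left, Fin.append_right]

end Glue


private lemma mulK (D d k m : ℕ) (h : k ≤ m) : (2*D+d)*k ≤ (2*D+d)*m :=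
  Nat.mul_le_mul_left _ h

private lemma gd0 (a : ℕ) (t : List ℕ) : (a :: t).getD 0 0 = a := rfl
private lemma gds (a : ℕ) (t : List ℕ) (i : ℕ) : (a :: t).getD (i+1) 0 = t.getD i 0 :=
  List.getD_cons_succ

/-- Core counting lemma: in a list where every "gap" is at most `D` and every big gap
(`> d`) has an adjacent small gap, all elements are bounded by
`3 * head + (2D+d) * (length - 1)` when tripled. -/
lemma countLemma (D d : ℕ) (hdD : d ≤ D) :
    ∀ (N : ℕ) (l : List ℕ), l.length ≤ N →
    (∀ i, i + 1 < l.length → l.getD (i+1) 0 ≤ l.getD i 0 + D) →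
    (∀ i, i + 1 < l.length → l.getD i 0 + d < l.getD (i+1) 0 →
      (1 ≤ i ∧ l.getD i 0 ≤ l.getD (i-1) 0 + d) ∨
      (i + 2 < l.length ∧ l.getD (i+2) 0 ≤ l.getD (i+1) 0 + d)) →
    ∀ y ∈ l, 3 * y ≤ 3 * l.getD 0 0 + (2*D + d) * (l.length - 1) := by
  intro N
  induction N with
  | zero =>
    intro l hlen _ _ y hy
    rw [Nat.le_zero, List.length_eq_zero_iff] at hlen
    subst hlen; cases hy
  | succ N IH =>
    intro l hlen hD hadj y hy
    match l, hy with
    | x :: t, hy =>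
      match t, hy with
      | [], hy =>
        have : y = x := by simpa using hy
        subst this; simp
      | b :: t', hy =>
        by_cases hb : b ≤ x + d
        · match t', hy with
          | [], hy =>
            rcases (by simpa using hy : y = x ∨ y = b) with rfl | rfl
            · simp
            · simp only [gd0, List.length_cons, List.length_nil]
              omega
          | c :: t'', hy =>
            by_cases hc : c ≤ b + d
            · -- recurse on tail t = b :: c :: t''
              have hD' : ∀ i, i + 1 < (b :: c :: t'').length →
                  (b :: c :: t'').getD (i+1) 0 ≤ (b :: c :: t'').getD i 0 + D := by
                intro i hi
                have := hD (i+1) (by simp at hi ⊢; omega)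
                simpa only [gds] using this
              have hadj' : ∀ i, i + 1 < (b :: c :: t'').length →
                  (b :: c :: t'').getD i 0 + d < (b :: c :: t'').getD (i+1) 0 →
                  (1 ≤ i ∧ (b :: c :: t'').getD i 0 ≤ (b :: c :: t'').getD (i-1) 0 + d) ∨
                  (i + 2 < (b :: c :: t'').length ∧
                    (b :: c :: t'').getD (i+2) 0 ≤ (b :: c :: t'').getD (i+1) 0 + d) := by
                intro i hi hbig
                match i with
                | 0 =>
                  exfalso
                  simp only [gd0, gds] at hbig
                  change b + d < c at hbig
                  omega
                | (i+1) =>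
                  have h2 := hadj (i+2) (by simp at hi ⊢; omega)
                    (by simpa only [gds] using hbig)
                  rcases h2 with ⟨h3, h4⟩ | ⟨h3, h4⟩
                  · left
                    refine ⟨by omega, ?_⟩
                    have : i + 2 - 1 = (i + 1 - 1) + 1 := by omega
                    rw [this] at h4
                    simpa only [gds] using h4
                  · right
                    refine ⟨by simp at h3 ⊢; omega, by simpa only [gds] using h4⟩
              have IH' := IH (b :: c :: t'') (by simp at hlen ⊢; omega) hD' hadj'
              rcases List.mem_cons.mp hy with rfl | hy'
              · simp
              · have h5 := IH' y hy'
                simp only [gd0, List.length_cons] at h5 ⊢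
                have hexp : (2*D + d) * (t''.length + 1 + 1 + 1 - 1)
                    = (2*D + d) * (t''.length + 1 + 1 - 1) + (2*D + d) * 1 := by
                  rw [← Nat.mul_add]; congr 1 <;> omega
                omega
            · -- second gap big : b + d < c ; recurse on t' = c :: t''
              have hbD : b ≤ x + D := by
                have := hD 0 (by simp); simp only [gd0, gds] at this; omega
              have hcD : c ≤ b + D := by
                have := hD 1 (by simp) ; simp only [gd0, gds] at this
                change c ≤ b + D at this; omega
              have hD' : ∀ i, i + 1 < (c :: t'').length →
                  (c :: t'').getD (i+1) 0 ≤ (c :: t'').getD i 0 + D := by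
                intro i hi
                have := hD (i+2) (by simp at hi ⊢; omega)
                simpa only [gds] using this
              have hadj' : ∀ i, i + 1 < (c :: t'').length →
                  (c :: t'').getD i 0 + d < (c :: t'').getD (i+1) 0 →
                  (1 ≤ i ∧ (c :: t'').getD i 0 ≤ (c :: t'').getD (i-1) 0 + d) ∨
                  (i + 2 < (c :: t'').length ∧
                    (c :: t'').getD (i+2) 0 ≤ (c :: t'').getD (i+1) 0 + d) := by
                intro i hi hbig
                have h2 := hadj (i+2) (by simp at hi ⊢; omega)
                  (by simpa only [gds] using hbig)
                match i with
                | 0 =>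
                  rcases h2 with ⟨h3, h4⟩ | ⟨h3, h4⟩
                  · exfalso
                    simp only [gds, gd0] at h4
                    change c ≤ b + d at h4
                    omega
                  · right
                    refine ⟨by simp at h3 ⊢; omega, by simpa only [gds] using h4⟩
                | (i+1) =>
                  rcases h2 with ⟨h3, h4⟩ | ⟨h3, h4⟩
                  · left
                    refine ⟨by omega, ?_⟩
                    have : i + 1 + 2 - 1 = (i + 1 - 1) + 1 + 1 := by omega
                    rw [this] at h4
                    simpa only [gds] using h4
                  · right
                    refine ⟨by simp at h3 ⊢; omega, by simpa only [gds] using h4⟩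
              have IH' := IH (c :: t'') (by simp at hlen ⊢; omega) hD' hadj'
              rcases List.mem_cons.mp hy with rfl | hy'
              · simp
              rcases List.mem_cons.mp hy' with rfl | hy''
              · simp only [gd0, List.length_cons]
                have hge := mulK D d 1 (t''.length + 1 + 1 + 1 - 1) (by omega)
                omega
              · have h5 := IH' y hy''
                simp only [gd0, List.length_cons] at h5 ⊢
                have hexp : (2*D + d) * (t''.length + 1 + 1 + 1 - 1)
                    = (2*D + d) * (t''.length + 1 - 1) + (2*D + d) * 2 := by
                  rw [← Nat.mul_add]; congr 1 <;> omega
                omega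
        · -- first gap big : x + d < b
          have h0 := hadj 0 (by simp) (by simp only [gd0, gds]; change x + d < b; omega)
          rcases h0 with ⟨h1, _⟩ | ⟨h1, h2⟩
          · omega
          have hbD : b ≤ x + D := by
            have := hD 0 (by simp); simp only [gd0, gds] at this; omega
          match t', hy with
          | [], _ => simp at h1
          | c :: t'', hy =>
            have hc : c ≤ b + d := by
              simp only [gds, gd0] at h2
              change c ≤ b + d at h2; omega
            match t'', hy with
            | [], hy =>
              rcases List.mem_cons.mp hy with rfl | hy'
              · simp
              rcases List.mem_cons.mp hy' with rfl | hy''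
              · simp only [gd0, List.length_cons, List.length_nil]
                omega
              · have : y = c := by simpa using hy''
                subst this
                simp only [gd0, List.length_cons, List.length_nil]
                omega
            | e :: t''', hy =>
              by_cases he : e ≤ c + d
              · -- recurse on c :: e :: t'''
                have hD' : ∀ i, i + 1 < (c :: e :: t''').length →
                    (c :: e :: t''').getD (i+1) 0 ≤ (c :: e :: t''').getD i 0 + D := by
                  intro i hi
                  have := hD (i+2) (by simp at hi ⊢; omega)
                  simpa only [gds] using this
                have hadj' : ∀ i, i + 1 < (c :: e :: t''').length →
                    (c :: e :: t''').getD i 0 + d < (c :: e :: t''').getD (i+1) 0 →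
                    (1 ≤ i ∧ (c :: e :: t''').getD i 0 ≤ (c :: e :: t''').getD (i-1) 0 + d) ∨
                    (i + 2 < (c :: e :: t''').length ∧
                      (c :: e :: t''').getD (i+2) 0 ≤ (c :: e :: t''').getD (i+1) 0 + d) := by
                  intro i hi hbig
                  match i with
                  | 0 =>
                    exfalso
                    simp only [gd0, gds] at hbig
                    change c + d < e at hbig
                    omega
                  | (i+1) =>
                    have h3 := hadj (i+3) (by simp at hi ⊢; omega)
                      (by simpa only [gds] using hbig)
                    rcases h3 with ⟨h4, h5⟩ | ⟨h4, h5⟩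
                    · left
                      refine ⟨by omega, ?_⟩
                      have : i + 3 - 1 = (i + 1 - 1) + 1 + 1 := by omega
                      rw [this] at h5
                      simpa only [gds] using h5
                    · right
                      refine ⟨by simp at h4 ⊢; omega, by simpa only [gds] using h5⟩
                have IH' := IH (c :: e :: t''') (by simp at hlen ⊢; omega) hD' hadj'
                rcases List.mem_cons.mp hy with rfl | hy'
                · simp
                rcases List.mem_cons.mp hy' with rfl | hy''
                · simp only [gd0, List.length_cons]
                  have hge := mulK D d 2 (t'''.length + 1 + 1 + 1 + 1 - 1) (by omega)
                  omega
                · have h5 := IH' y hy''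
                  simp only [gd0, List.length_cons] at h5 ⊢
                  have hexp : (2*D + d) * (t'''.length + 1 + 1 + 1 + 1 - 1)
                      = (2*D + d) * (t'''.length + 1 + 1 - 1) + (2*D + d) * 2 := by
                    rw [← Nat.mul_add]; congr 1 <;> omega
                  omega
              · -- third gap big : c + d < e ; recurse on e :: t'''
                have heD : e ≤ c + D := by
                  have := hD 2 (by simp)
                  simp only [gds, gd0] at this
                  change e ≤ c + D at this; omega
                have hD' : ∀ i, i + 1 < (e :: t''').length →
                    (e :: t''').getD (i+1) 0 ≤ (e :: t''').getD i 0 + D := by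
                  intro i hi
                  have := hD (i+3) (by simp at hi ⊢; omega)
                  simpa only [gds] using this
                have hadj' : ∀ i, i + 1 < (e :: t''').length →
                    (e :: t''').getD i 0 + d < (e :: t''').getD (i+1) 0 →
                    (1 ≤ i ∧ (e :: t''').getD i 0 ≤ (e :: t''').getD (i-1) 0 + d) ∨
                    (i + 2 < (e :: t''').length ∧
                      (e :: t''').getD (i+2) 0 ≤ (e :: t''').getD (i+1) 0 + d) := by
                  intro i hi hbig
                  have h3 := hadj (i+3) (by simp at hi ⊢; omega)
                    (by simpa only [gds] using hbig)
                  match i with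
                  | 0 =>
                    rcases h3 with ⟨h4, h5⟩ | ⟨h4, h5⟩
                    · exfalso
                      simp only [gds, gd0] at h5
                      change e ≤ c + d at h5
                      omega
                    · right
                      refine ⟨by simp at h4 ⊢; omega, by simpa only [gds] using h5⟩
                  | (i+1) =>
                    rcases h3 with ⟨h4, h5⟩ | ⟨h4, h5⟩
                    · left
                      refine ⟨by omega, ?_⟩
                      have : i + 1 + 3 - 1 = (i + 1 - 1) + 1 + 1 + 1 := by omega
                      rw [this] at h5
                      simpa only [gds] using h5
                    · right
                      refine ⟨by simp at h4 ⊢; omega, by simpa only [gds] using h5⟩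
                have IH' := IH (e :: t''') (by simp at hlen ⊢; omega) hD' hadj'
                rcases List.mem_cons.mp hy with rfl | hy'
                · simp
                rcases List.mem_cons.mp hy' with rfl | hy''
                · simp only [gd0, List.length_cons]
                  have hge := mulK D d 2 (t'''.length + 1 + 1 + 1 + 1 - 1) (by omega)
                  omega
                rcases List.mem_cons.mp hy'' with rfl | hy'''
                · simp only [gd0, List.length_cons]
                  have hge := mulK D d 2 (t'''.length + 1 + 1 + 1 + 1 - 1) (by omega)
                  omega
                · have h5 := IH' y hy'''
                  simp only [gd0, List.length_cons] at h5 ⊢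
                  have hexp : (2*D + d) * (t'''.length + 1 + 1 + 1 + 1 - 1)
                      = (2*D + d) * (t'''.length + 1 - 1) + (2*D + d) * 3 := by
                    rw [← Nat.mul_add]; congr 1 <;> omega
                  omega


lemma setCount (D d : ℕ) (hdD : d ≤ D) (L : Set ℕ) (hfin : L.Finite) (hne : L.Nonempty)
    (hDgap : ∀ x y, x ∈ L → y ∈ L → x < y → (∀ c ∈ L, ¬(x < c ∧ c < y)) → y ≤ x + D)
    (hAdj : ∀ x y, x ∈ L → y ∈ L → x < y → (∀ c ∈ L, ¬(x < c ∧ c < y)) → x + d < y →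
      (∃ x' ∈ L, x' < x ∧ x ≤ x' + d) ∨ (∃ y' ∈ L, y < y' ∧ y' ≤ y + d)) :
    3 * sSup L ≤ 3 * sInf L + (2*D + d) * (L.ncard - 1) := by
  classical
  set l : List ℕ := hfin.toFinset.sort (· ≤ ·) with hl
  have hmeml : ∀ a, a ∈ l ↔ a ∈ L := by
    intro a; rw [hl, Finset.mem_sort, Set.Finite.mem_toFinset]
  have hsort : l.Pairwise (· < ·) := (Finset.sortedLT_sort hfin.toFinset).pairwise
  have hlen : l.length = L.ncard := by
    rw [hl, Finset.length_sort, Set.ncard_eq_toFinset_card L hfin]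
  have hmono : ∀ i j (hi : i < l.length) (hj : j < l.length), i < j → l[i] < l[j] := by
    intro i j hi hj hij
    exact hsort.rel_get_of_lt (a := ⟨i, hi⟩) (b := ⟨j, hj⟩) hij
  have hgetmem : ∀ i (hi : i < l.length), l[i] ∈ L := by
    intro i hi; rw [← hmeml]; exact l.getElem_mem hi
  have hidx : ∀ a (ha : a ∈ l), ∃ (j : ℕ) (hj : j < l.length), l[j] = a := by
    intro a ha
    obtain ⟨j, hj⟩ := List.get_of_mem ha
    exact ⟨j.1, j.2, hj⟩
  have hnb : ∀ i (hi : i + 1 < l.length), ∀ c ∈ L, ¬(l[i] < c ∧ c < l[i+1]) := by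
    intro i hi c hc ⟨hc1, hc2⟩
    obtain ⟨j, hj, rfl⟩ := hidx c ((hmeml c).mpr hc)
    rcases Nat.lt_trichotomy j i with h | rfl | h
    · exact absurd (hmono j i hj (by omega) h) (by omega)
    · omega
    · rcases Nat.lt_or_ge j (i+1) with h' | h'
      · omega
      · rcases Nat.eq_or_lt_of_le h' with rfl | h''
        · omega
        · exact absurd (hmono (i+1) j hi hj h'') (by omega)
  have hD' : ∀ i, i + 1 < l.length → l.getD (i+1) 0 ≤ l.getD i 0 + D := by
    intro i hi
    rw [List.getD_eq_getElem l 0 hi, List.getD_eq_getElem l 0 (by omega)]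
    exact hDgap _ _ (hgetmem i (by omega)) (hgetmem (i+1) hi)
      (hmono i (i+1) (by omega) hi (by omega)) (hnb i hi)
  have hadj' : ∀ i, i + 1 < l.length → l.getD i 0 + d < l.getD (i+1) 0 →
      (1 ≤ i ∧ l.getD i 0 ≤ l.getD (i-1) 0 + d) ∨
      (i + 2 < l.length ∧ l.getD (i+2) 0 ≤ l.getD (i+1) 0 + d) := by
    intro i hi hbig
    rw [List.getD_eq_getElem l 0 hi, List.getD_eq_getElem l 0 (by omega)] at hbig
    rcases hAdj _ _ (hgetmem i (by omega)) (hgetmem (i+1) hi)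
        (hmono i (i+1) (by omega) hi (by omega)) (hnb i hi) hbig with
      ⟨x', hx'L, hx'lt, hx'cl⟩ | ⟨y', hy'L, hy'lt, hy'cl⟩
    · obtain ⟨j, hj, rfl⟩ := hidx x' ((hmeml x').mpr hx'L)
      have hji : j < i := by
        by_contra hcon
        push_neg at hcon
        rcases Nat.eq_or_lt_of_le hcon with rfl | h''
        · omega
        · exact absurd (hmono i j (by omega) hj h'') (by omega)
      left
      refine ⟨by omega, ?_⟩
      rw [List.getD_eq_getElem l 0 (show i < l.length by omega),
        List.getD_eq_getElem l 0 (show i - 1 < l.length by omega)]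
      have : l[j] ≤ l[i-1] := by
        rcases Nat.eq_or_lt_of_le (show j ≤ i - 1 by omega) with h | h
        · subst h; rfl
        · exact le_of_lt (hmono j (i-1) hj (by omega) h)
      omega
    · obtain ⟨j, hj, rfl⟩ := hidx y' ((hmeml y').mpr hy'L)
      have hji : i + 1 < j := by
        by_contra hcon
        push_neg at hcon
        rcases Nat.eq_or_lt_of_le hcon with rfl | h''
        · omega
        · exact absurd (hmono j (i+1) hj hi h'') (by omega)
      right
      refine ⟨by omega, ?_⟩
      rw [List.getD_eq_getElem l 0 (show i + 2 < l.length by omega),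
        List.getD_eq_getElem l 0 hi]
      have : l[i+2] ≤ l[j] := by
        rcases Nat.eq_or_lt_of_le (show i + 2 ≤ j by omega) with h | h
        · subst h; rfl
        · exact le_of_lt (hmono (i+2) j (by omega) hj h)
      omega
  have hbdd : BddAbove L := hfin.bddAbove
  have hsupmem : sSup L ∈ L := Nat.sSup_mem hne hbdd
  have hinfmem : sInf L ∈ L := Nat.sInf_mem hne
  have hlen0 : 0 < l.length := by
    rw [hlen]
    exact (Set.ncard_pos hfin).mpr hne
  have hhead : l.getD 0 0 = sInf L := by
    rw [List.getD_eq_getElem l 0 hlen0]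
    have h1 : sInf L ≤ l[0] := Nat.sInf_le (hgetmem 0 hlen0)
    obtain ⟨j, hj, hjeq⟩ := hidx (sInf L) ((hmeml _).mpr hinfmem)
    have h2 : l[0] ≤ l[j] := by
      rcases Nat.eq_or_lt_of_le (Nat.zero_le j) with h | h
      · subst h; rfl
      · exact le_of_lt (hmono 0 j hlen0 hj h)
    omega
  have := countLemma D d hdD l.length l (le_refl _) hD' hadj' (sSup L)
    ((hmeml _).mpr hsupmem)
  rw [hhead, hlen] at this
  exact this


section Master

variable {r₁ r₂ : ℕ} {g1 : Fin r₁ → ℕ} {g2 : Fin r₂ → ℕ} {lam mu : ℕ}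

/-- The master lemma: under suitable hypotheses on `lam` and `mu`, the gluing is tasty. -/
lemma master (hr₁ : 0 < r₁) (hr₂ : 0 < r₂)
    (hpos1 : ∀ i, 0 < g1 i) (hpos2 : ∀ i, 0 < g2 i)
    (hlam0 : 0 < lam) (hmu0 : 0 < mu)
    (hmu_mem : mem g2 mu)
    (hcop : Nat.Coprime lam mu)
    (hlamlen : lengthSet g1 lam = {2})
    (hmu2 : ∃ u v, u ∈ lengthSet g2 mu ∧ v ∈ lengthSet g2 mu ∧ u ≠ v)
    (hmubig : ∀ ℓ ∈ lengthSet g2 mu,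
      max (r₁ * Finset.univ.sup g1) (r₂ * Finset.univ.sup g2) + 2 < ℓ) :
    Tasty (Fin.append (fun i => mu * g1 i) (fun j => lam * g2 j)) := by
  classical
  set d := max (r₁ * Finset.univ.sup g1) (r₂ * Finset.univ.sup g2) with hd
  set h : Fin (r₁ + r₂) → ℕ := Fin.append (fun i => mu * g1 i) (fun j => lam * g2 j) with hh
  have hposh : ∀ i, 0 < h i := by
    intro i
    refine Fin.addCases (fun i => ?_) (fun j => ?_) i
    · simp only [hh, Fin.append_left]
      exact Nat.mul_pos hmu0 (hpos1 i)
    · simp only [hh, Fin.append_right]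
      exact Nat.mul_pos hlam0 (hpos2 j)
  have hk : 0 < r₁ + r₂ := by omega
  have hlam_mem : mem g1 lam := by
    have : (2 : ℕ) ∈ lengthSet g1 lam := by rw [hlamlen]; rfl
    exact mem_of_lengthSet this
  -- boundedness of the Delta set
  have hDeltaBdd : ∀ e ∈ Delta h, e ≤ (r₁ + r₂) * Finset.univ.sup h := by
    intro e he
    rw [Delta, Set.mem_iUnion] at he
    obtain ⟨n, a, ha, b, hb, hab, hbetween, rfl⟩ := he
    obtain ⟨c, hc, hc1, hc2⟩ := exists_length_above hk hposh ha hb hab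
    have := hbetween c hc
    omega
  have hbddD : BddAbove (Delta h) := ⟨(r₁ + r₂) * Finset.univ.sup h, fun e he => hDeltaBdd e he⟩
  set D := sSup (Delta h) with hD
  have hDub : ∀ e ∈ Delta h, e ≤ D := fun e he => le_csSup hbddD he
  -- length set of lam * mu
  have h2mem : (2 : ℕ) ∈ lengthSet h (lam * mu) := by
    rw [hh, glue_length_iff]
    refine ⟨lam, 0, 2, 0, by ring, by rw [hlamlen]; rfl, ?_, rfl⟩
    rw [lengthSet_zero hpos2]; rfl
  have hmusub : ∀ ℓ ∈ lengthSet g2 mu, ℓ ∈ lengthSet h (lam * mu) := by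
    intro ℓ hℓ
    rw [hh, glue_length_iff]
    exact ⟨0, mu, 0, ℓ, by ring, by rw [lengthSet_zero hpos1]; rfl, hℓ, by ring⟩
  have hlamu : ∀ ℓ ∈ lengthSet h (lam * mu), ℓ = 2 ∨ ℓ ∈ lengthSet g2 mu := by
    intro ℓ hℓ
    rw [hh, glue_length_iff] at hℓ
    obtain ⟨a, b, ℓ₁, ℓ₂, heq, hℓ₁, hℓ₂, rfl⟩ := hℓ
    have hble : lam * b ≤ lam * mu := by omega
    have hbmu : b ≤ mu := Nat.le_of_mul_le_mul_left hble hlam0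
    obtain ⟨t, ht⟩ := Nat.le.dest hbmu
    have heq2 : mu * a = lam * t := by
      have h3 : lam * (b + t) = lam * b + lam * t := by ring
      rw [ht] at h3
      omega
    have hdvda : lam ∣ a := (Nat.Coprime.dvd_of_dvd_mul_left hcop) ⟨t, heq2⟩
    obtain ⟨s, rfl⟩ := hdvda
    have hs1 : s ≤ 1 := by
      by_contra hcon
      push_neg at hcon
      have h2s : lam * mu * 2 ≤ mu * (lam * s) := by
        calc lam * mu * 2 = mu * (lam * 2) := by ring
        _ ≤ mu * (lam * s) :=
            Nat.mul_le_mul_left _ (Nat.mul_le_mul_left _ (by omega))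
      have hpos : 0 < lam * mu := by positivity
      omega
    match s, hs1 with
    | 0, _ =>
      right
      rw [Nat.mul_zero] at hℓ₁ heq
      rw [lengthSet_zero hpos1] at hℓ₁
      have : ℓ₁ = 0 := hℓ₁
      subst this
      have hbemu : b = mu := by
        have : lam * b = lam * mu := by omega
        exact Nat.eq_of_mul_eq_mul_left hlam0 this
      subst hbemu
      simpa using hℓ₂
    | 1, _ =>
      left
      rw [Nat.mul_one] at hℓ₁ heq
      have hb0 : b = 0 := by
        have h0 : lam * b = 0 := by
          have : mu * lam = lam * mu := by ring
          omega
        have := Nat.mul_eq_zero.mp h0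
        omega
      subst hb0
      rw [lengthSet_zero hpos2] at hℓ₂
      have : ℓ₂ = 0 := hℓ₂
      subst this
      rw [hlamlen] at hℓ₁
      have : ℓ₁ = 2 := hℓ₁
      omega
  -- the big gap element of the Delta set
  obtain ⟨u0, v0, hu0, hv0, huv0⟩ := hmu2
  have hmune : (lengthSet g2 mu).Nonempty := ⟨u0, hu0⟩
  set m₀ := sInf (lengthSet g2 mu) with hm₀
  have hm₀mem : m₀ ∈ lengthSet g2 mu := Nat.sInf_mem hmune
  have hm₀big : d + 2 < m₀ := hmubig m₀ hm₀mem
  have hgap : m₀ - 2 ∈ Delta h := by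
    rw [Delta, Set.mem_iUnion]
    refine ⟨lam * mu, 2, h2mem, m₀, hmusub m₀ hm₀mem, by omega, ?_, rfl⟩
    rintro c hc ⟨hc1, hc2⟩
    rcases hlamu c hc with rfl | hcmu
    · omega
    · have : m₀ ≤ c := Nat.sInf_le hcmu
      omega
  have hdD : d < D := by
    have := hDub _ hgap
    omega
  -- the step lemma for representations
  have hstep : ∀ a b a' b', mem g1 a → mem g2 b → mem g1 a' → mem g2 b' →
      mu * a + lam * b = mu * a' + lam * b' → a < a' →
      ∃ b₂, mem g2 b₂ ∧ b₂ + mu = b := by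
    intro a b a' b' ha hb ha' hb' heq haa
    have hbb : b' < b := by
      rcases Nat.lt_or_ge b' b with h' | h'
      · exact h'
      · exfalso
        have h1 : mu * a < mu * a' := by
          exact mul_lt_mul_of_pos_left haa hmu0
        have h2 : lam * b ≤ lam * b' := Nat.mul_le_mul_left _ h'
        omega
    obtain ⟨w, hw⟩ := Nat.le.dest (le_of_lt haa)
    obtain ⟨v, hv⟩ := Nat.le.dest (le_of_lt hbb)
    have hweq : mu * w = lam * v := by
      have e1 : mu * (a + w) = mu * a + mu * w := by ring
      have e2 : lam * (b' + v) = lam * b' + lam * v := by ring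
      rw [← hw] at heq
      rw [← hv] at heq
      omega
    have hdvdw : lam ∣ w := (Nat.Coprime.dvd_of_dvd_mul_left hcop) ⟨v, hweq⟩
    obtain ⟨s, rfl⟩ := hdvdw
    have hs0 : 0 < s := by
      rcases Nat.eq_zero_or_pos s with rfl | h'
      · simp at hw; omega
      · exact h'
    have hveq : v = mu * s := by
      have : lam * (mu * s) = lam * v := by
        calc lam * (mu * s) = mu * (lam * s) := by ring
        _ = lam * v := hweq
      exact (Nat.eq_of_mul_eq_mul_left hlam0 this).symm
    refine ⟨b' + mu * (s - 1), mem_add hb' ?_, ?_⟩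
    · have : mu * (s-1) = (s-1) * mu := by ring
      rw [this]
      exact mem_smul _ hmu_mem
    · have hmuexp : mu * (s - 1) + mu = mu * s := by
        have : mu * ((s - 1) + 1) = mu * (s-1) + mu := by ring
        have hs : (s - 1) + 1 = s := by omega
        rw [hs] at this
        omega
      omega
  -- no semigroup element just below `b` when the length set of `b` is a singleton
  have hsing : ∀ b β, (∀ γ ∈ lengthSet g2 b, γ = β) → ∀ b₂, mem g2 b₂ → b₂ + mu ≠ b := by
    intro b β hβ b₂ hb₂ habs
    obtain ⟨w, hw⟩ := lengthSet_nonempty hb₂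
    have h1 : w + u0 ∈ lengthSet g2 b := by rw [← habs]; exact length_add hw hu0
    have h2 : w + v0 ∈ lengthSet g2 b := by rw [← habs]; exact length_add hw hv0
    have := hβ _ h1
    have := hβ _ h2
    omega
  -- the BIG geometric lemma
  have hBIG : ∀ n x y, x ∈ lengthSet h n → y ∈ lengthSet h n → x < y →
      (∀ c ∈ lengthSet h n, ¬(x < c ∧ c < y)) → x + d < y →
      (∃ x' ∈ lengthSet h n, x' < x ∧ x ≤ x' + d) ∨
      (∃ y' ∈ lengthSet h n, y < y' ∧ y' ≤ y + d) := by
    intro n x y hx hy hxy hnb hbig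
    have hx' := hx
    have hy' := hy
    rw [hh, glue_length_iff] at hx' hy'
    obtain ⟨a, b, α, β, heqx, hα, hβ, rfl⟩ := hx'
    obtain ⟨a', b', α', β', heqy, hα', hβ', rfl⟩ := hy'
    have hB1 : r₁ * Finset.univ.sup g1 ≤ d := le_max_left _ _
    have hB2 : r₂ * Finset.univ.sup g2 ≤ d := le_max_right _ _
    -- reconstruct glue lengths
    have hmk : ∀ a b γ δ, mu * a + lam * b = n → γ ∈ lengthSet g1 a → δ ∈ lengthSet g2 b →
        γ + δ ∈ lengthSet h n := by
      intro a b γ δ he hγ hδ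
      rw [hh, glue_length_iff]
      exact ⟨a, b, γ, δ, he, hγ, hδ, rfl⟩
    by_cases hA : ∃ γ ∈ lengthSet g1 a, γ ≠ α
    · -- another length at a: since big gap above, α is maximal, so γ < α
      left
      obtain ⟨γ, hγ, hγne⟩ := hA
      have hγα : γ < α := by
        rcases Nat.lt_or_ge γ α with h' | h'
        · exact h'
        · exfalso
          have hlt : α < γ := by omega
          obtain ⟨αp, hαp, hαp1, hαp2⟩ := exists_length_above hr₁ hpos1 hα hγ hlt
          have hmem2 := hmk a b αp β heqx hαp hβ
          exact hnb _ hmem2 ⟨by omega, by omega⟩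
      obtain ⟨αm, hαm, hαm1, hαm2⟩ := exists_length_below hr₁ hpos1 hγ hα hγα
      exact ⟨αm + β, hmk a b αm β heqx hαm hβ, by omega, by omega⟩
    · by_cases hB : ∃ δ ∈ lengthSet g2 b, δ ≠ β
      · left
        obtain ⟨δ, hδ, hδne⟩ := hB
        have hδβ : δ < β := by
          rcases Nat.lt_or_ge δ β with h' | h'
          · exact h'
          · exfalso
            have hlt : β < δ := by omega
            obtain ⟨βp, hβp, hβp1, hβp2⟩ := exists_length_above hr₂ hpos2 hβ hδ hlt
            have hmem2 := hmk a b α βp heqx hα hβp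
            exact hnb _ hmem2 ⟨by omega, by omega⟩
        obtain ⟨βm, hβm, hβm1, hβm2⟩ := exists_length_below hr₂ hpos2 hδ hβ hδβ
        exact ⟨α + βm, hmk a b α βm heqx hα hβm, by omega, by omega⟩
      · by_cases hA' : ∃ γ ∈ lengthSet g1 a', γ ≠ α'
        · right
          obtain ⟨γ, hγ, hγne⟩ := hA'
          have hγα : α' < γ := by
            rcases Nat.lt_or_ge α' γ with h' | h'
            · exact h'
            · exfalso
              have hlt : γ < α' := by omega
              obtain ⟨αm, hαm, hαm1, hαm2⟩ := exists_length_below hr₁ hpos1 hγ hα' hlt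
              have hmem2 := hmk a' b' αm β' heqy hαm hβ'
              exact hnb _ hmem2 ⟨by omega, by omega⟩
          obtain ⟨αp, hαp, hαp1, hαp2⟩ := exists_length_above hr₁ hpos1 hα' hγ hγα
          exact ⟨αp + β', hmk a' b' αp β' heqy hαp hβ', by omega, by omega⟩
        · by_cases hB' : ∃ δ ∈ lengthSet g2 b', δ ≠ β'
          · right
            obtain ⟨δ, hδ, hδne⟩ := hB'
            have hδβ : β' < δ := by
              rcases Nat.lt_or_ge β' δ with h' | h'
              · exact h'
              · exfalso
                have hlt : δ < β' := by omega
                obtain ⟨βm, hβm, hβm1, hβm2⟩ := exists_length_below hr₂ hpos2 hδ hβ' hlt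
                have hmem2 := hmk a' b' α' βm heqy hα' hβm
                exact hnb _ hmem2 ⟨by omega, by omega⟩
            obtain ⟨βp, hβp, hβp1, hβp2⟩ := exists_length_above hr₂ hpos2 hβ' hδ hδβ
            exact ⟨α' + βp, hmk a' b' α' βp heqy hα' hβp, by omega, by omega⟩
          · -- all four length sets are singletons: contradiction
            exfalso
            push_neg at hA hB hA' hB'
            rcases Nat.lt_trichotomy a a' with hlt | heqa | hlt
            · obtain ⟨b₂, hb₂, hb₂eq⟩ := hstep a b a' b' (mem_of_lengthSet hα)
                (mem_of_lengthSet hβ) (mem_of_lengthSet hα') (mem_of_lengthSet hβ')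
                (by omega) hlt
              exact hsing b β hB b₂ hb₂ hb₂eq
            · subst heqa
              have hbb : b = b' := by
                have : lam * b = lam * b' := by omega
                exact Nat.eq_of_mul_eq_mul_left hlam0 this
              subst hbb
              have e1 : α' = α := hA α' hα'
              have e2 : β' = β := hB β' hβ'
              omega
            · obtain ⟨b₂, hb₂, hb₂eq⟩ := hstep a' b' a b (mem_of_lengthSet hα')
                (mem_of_lengthSet hβ') (mem_of_lengthSet hα)
                (mem_of_lengthSet hβ) (by omega) hlt
              exact hsing b' β' hB' b₂ hb₂ hb₂eq
  -- per-element lower bound on LD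
  have hperN : ∀ n, 2 ≤ (lengthSet h n).ncard →
      (3 : ℝ) / ((2*D + d : ℕ) : ℝ) ≤ LD h n := by
    intro n hn
    set L := lengthSet h n with hLdef
    have hfin : L.Finite := lengthSet_finite hposh n
    have hne : L.Nonempty := by
      rcases Set.eq_empty_or_nonempty L with h' | h'
      · rw [h'] at hn; simp at hn
      · exact h'
    have hcount := setCount D d (by omega) L hfin hne
      (by
        intro x y hx hy hxy hnb
        have hdel : y - x ∈ Delta h := by
          rw [Delta, Set.mem_iUnion]
          exact ⟨n, x, hx, y, hy, hxy, hnb, rfl⟩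
        have := hDub _ hdel
        omega)
      (by
        intro x y hx hy hxy hnb hbig
        exact hBIG n x y hx hy hxy hnb hbig)
    -- strict inequality between sup and inf
    obtain ⟨uu, vv, huu, hvv, huvne⟩ := (Set.one_lt_ncard_iff hfin).mp (by omega)
    have hbddL : BddAbove L := hfin.bddAbove
    have hMm : sInf L < sSup L := by
      have h1 : uu ≤ sSup L := le_csSup hbddL huu
      have h2 : vv ≤ sSup L := le_csSup hbddL hvv
      have h3 : sInf L ≤ uu := Nat.sInf_le huu
      have h4 : sInf L ≤ vv := Nat.sInf_le hvv
      omega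
    have hcard1 : 1 ≤ L.ncard := by omega
    have hden : (0:ℝ) < ((sSup L : ℕ) : ℝ) - ((sInf L : ℕ) : ℝ) := by
      have : ((sInf L : ℕ) : ℝ) < ((sSup L : ℕ) : ℝ) := by exact_mod_cast hMm
      linarith
    have hden2 : (0:ℝ) < ((2*D + d : ℕ) : ℝ) := by
      exact_mod_cast (show (0:ℕ) < 2*D + d by omega)
    rw [LD, div_le_div_iff₀ hden2 hden]
    · -- 3 * (sSup - sInf) ≤ (ncard - 1) * (2D + d)
      have hcast : ((L.ncard : ℝ) - 1) = ((L.ncard - 1 : ℕ) : ℝ) := by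
        rw [Nat.cast_sub hcard1]; norm_num
      rw [hcast]
      have hfinal : 3 * (sSup L - sInf L) ≤ (L.ncard - 1) * (2*D + d) := by
        have := hcount
        have hle : sInf L ≤ sSup L := le_of_lt hMm
        calc 3 * (sSup L - sInf L) = 3 * sSup L - 3 * sInf L := by omega
        _ ≤ (2*D + d) * (L.ncard - 1) := by omega
        _ = (L.ncard - 1) * (2*D + d) := by ring
      calc (3:ℝ) * (((sSup L : ℕ) : ℝ) - ((sInf L : ℕ) : ℝ))
          = ((3 * (sSup L - sInf L) : ℕ) : ℝ) := by
            rw [Nat.cast_mul, Nat.cast_sub (le_of_lt hMm)]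
            norm_num
      _ ≤ (((L.ncard - 1) * (2*D + d) : ℕ) : ℝ) := by exact_mod_cast hfinal
      _ = ((L.ncard - 1 : ℕ) : ℝ) * ((2*D + d : ℕ) : ℝ) := by push_cast; ring
  -- conclude
  have hwitness : 2 ≤ (lengthSet h (lam * mu)).ncard := by
    have hfin : (lengthSet h (lam * mu)).Finite := lengthSet_finite hposh _
    have := (Set.one_lt_ncard_iff hfin).mpr ⟨2, m₀, h2mem, hmusub m₀ hm₀mem, by omega⟩
    omega
  have hLDsgp : (3 : ℝ) / ((2*D + d : ℕ) : ℝ) ≤ LDsgp h := by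
    apply le_csInf
    · exact ⟨LD h (lam * mu), lam * mu, hwitness, rfl⟩
    · rintro x ⟨n, hn, rfl⟩
      exact hperN n hn
  have hfrac : (1 : ℝ) / ((D : ℕ) : ℝ) < (3 : ℝ) / ((2*D + d : ℕ) : ℝ) := by
    have hD0 : 0 < D := by omega
    rw [div_lt_div_iff₀ (by exact_mod_cast hD0) (by exact_mod_cast (show (0:ℕ) < 2*D + d by omega))]
    have : (2*D + d : ℕ) < 3 * D := by omega
    calc (1:ℝ) * ((2*D + d : ℕ) : ℝ) = ((2*D + d : ℕ) : ℝ) := by ring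
    _ < ((3 * D : ℕ) : ℝ) := by exact_mod_cast this
    _ = (3:ℝ) * ((D : ℕ) : ℝ) := by push_cast; ring
  rw [Tasty]
  calc (1 : ℝ) / ((sSup (Delta h) : ℕ) : ℝ) < (3 : ℝ) / ((2*D + d : ℕ) : ℝ) := hfrac
  _ ≤ LDsgp h := hLDsgp

end Master


lemma length_mul_gen {k : ℕ} (g : Fin k → ℕ) (c : ℕ) (i : Fin k) :
    c ∈ lengthSet g (c * g i) :=
  ⟨fun j => if j = i then c else 0, by simp [facs], by simp⟩

lemma exists_mem_modeq {k : ℕ} (g : Fin k → ℕ) (L : ℕ) (hL : 0 < L) (s : Finset (Fin k)) :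
    ∃ m : ℕ, mem g m ∧ (m : ℤ) ≡ ((s.gcd g : ℕ) : ℤ) [ZMOD L] := by
  classical
  induction s using Finset.induction_on with
  | empty => exact ⟨0, mem_zero g, by simp⟩
  | @insert a s ha ih =>
    obtain ⟨my, hmy, hmyeq⟩ := ih
    have hL' : (L : ℤ) ≠ 0 := by exact_mod_cast Nat.pos_iff_ne_zero.mp hL
    set x := g a with hx
    set y := s.gcd g with hy
    set A := Nat.gcdA x y with hA
    set B := Nat.gcdB x y with hB
    set α := (A % (L : ℤ)).toNat with hα
    set β := (B % (L : ℤ)).toNat with hβ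
    have hαeq : (α : ℤ) ≡ A [ZMOD L] := by
      rw [hα, Int.toNat_of_nonneg (Int.emod_nonneg _ hL')]
      exact Int.emod_emod_of_dvd _ dvd_rfl
    have hβeq : (β : ℤ) ≡ B [ZMOD L] := by
      rw [hβ, Int.toNat_of_nonneg (Int.emod_nonneg _ hL')]
      exact Int.emod_emod_of_dvd _ dvd_rfl
    refine ⟨α * x + β * my, mem_add (mem_mul_gen g α a) (mem_smul β hmy), ?_⟩
    have hgins : (insert a s).gcd g = Nat.gcd x y := by
      rw [Finset.gcd_insert]; rfl
    rw [hgins]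
    have hcast : ((α * x + β * my : ℕ) : ℤ) = (α : ℤ) * (x : ℤ) + (β : ℤ) * (my : ℤ) := by
      push_cast; ring
    rw [hcast]
    have step1 : (α : ℤ) * (x : ℤ) + (β : ℤ) * (my : ℤ) ≡ A * x + B * y [ZMOD L] :=
      Int.ModEq.add (hαeq.mul_right _) (Int.ModEq.mul hβeq hmyeq)
    have step2 : (A * (x:ℤ) + B * (y:ℤ)) = ((Nat.gcd x y : ℕ) : ℤ) := by
      rw [Nat.gcd_eq_gcd_ab]; ring
    rw [← step2]
    exact step1

theorem stmt17 (r₁ r₂ : ℕ) (g1 : Fin r₁ → ℕ) (g2 : Fin r₂ → ℕ)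
    (hpos1 : ∀ i, 0 < g1 i) (hpos2 : ∀ i, 0 < g2 i)
    (hmin1 : IsMinGen g1) (hmin2 : IsMinGen g2)
    (hgcd1 : Finset.univ.gcd g1 = 1) (hgcd2 : Finset.univ.gcd g2 = 1)
    (hnf1 : ∃ n : ℕ, 2 ≤ (facs g1 n).ncard)
    (hnf2 : ∃ n : ℕ, 2 ≤ (facs g2 n).ncard) :
    {p : ℕ × ℕ | NonAtom g1 p.1 ∧ NonAtom g2 p.2 ∧ Nat.Coprime p.1 p.2 ∧
      Tasty (Fin.append (fun i => p.2 * g1 i) (fun j => p.1 * g2 j))}.Infinite := by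
  classical
  -- r₁ ≥ 1
  have hr₁ : 0 < r₁ := by
    rcases Nat.eq_zero_or_pos r₁ with h0 | h
    · exfalso
      obtain ⟨n, hn⟩ := hnf1
      subst h0
      have hsub : (facs g1 n).Subsingleton := fun z _ w _ => funext fun i => i.elim0
      have := (Set.ncard_le_one_iff hsub.finite).mpr (fun ha hb => hsub ha hb)
      omega
    · exact h
  -- r₂ ≥ 2
  have hr₂ : 2 ≤ r₂ := by
    by_contra hcon
    push_neg at hcon
    obtain ⟨n, hn⟩ := hnf2
    have h01 : r₂ = 0 ∨ r₂ = 1 := by omega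
    rcases h01 with h0 | h1
    · subst h0
      have hsub : (facs g2 n).Subsingleton := fun z _ w _ => funext fun i => i.elim0
      have := (Set.ncard_le_one_iff hsub.finite).mpr (fun ha hb => hsub ha hb)
      omega
    · subst h1
      have hsub : (facs g2 n).Subsingleton := by
        intro z hz w hw
        replace hz : ∑ j, z j * g2 j = n := hz
        replace hw : ∑ j, w j * g2 j = n := hw
        rw [Fin.sum_univ_one] at hz hw
        have : z 0 * g2 0 = w 0 * g2 0 := by omega
        have h00 : z 0 = w 0 := Nat.eq_of_mul_eq_mul_right (hpos2 0) this
        funext i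
        rw [Fin.eq_zero i, h00]
      have := (Set.ncard_le_one_iff hsub.finite).mpr (fun ha hb => hsub ha hb)
      omega
  -- two distinct generators of g2
  have h0lt : (0 : ℕ) < r₂ := by omega
  have h1lt : (1 : ℕ) < r₂ := by omega
  set i0 : Fin r₂ := ⟨0, h0lt⟩ with hi0
  set i1 : Fin r₂ := ⟨1, h1lt⟩ with hi1
  have hne01 : i0 ≠ i1 := by
    intro hcon
    have := congrArg Fin.val hcon
    simp [hi0, hi1] at this
  have hq01 : g2 i0 ≠ g2 i1 := by
    intro hcon
    apply hmin2 i1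
    refine ⟨fun j => if j = i0 then 1 else 0, ?_, ?_⟩
    · show (if i1 = i0 then (1:ℕ) else 0) = 0
      rw [if_neg (Ne.symm hne01)]
    · have : ∀ j, (if j = i0 then 1 else 0) * g2 j = if j = i0 then g2 i0 else 0 := by
        intro j
        split_ifs with hj
        · rw [hj]; ring
        · ring
      rw [Finset.sum_congr rfl (fun j _ => this j), Finset.sum_ite_eq' Finset.univ i0]
      simp [hcon]
  -- minimal generator of g1
  obtain ⟨ip, -, hip⟩ := Finset.exists_min_image Finset.univ g1
    (Finset.univ_nonempty_iff.mpr (Fin.pos_iff_nonempty.mp hr₁))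
  set p := g1 ip with hpdef
  have hp0 : 0 < p := hpos1 ip
  -- the length set of 2p is exactly {2}
  have hlamlen : lengthSet g1 (2 * p) = {2} := by
    ext ℓ
    simp only [Set.mem_singleton_iff]
    constructor
    · rintro ⟨z, hz, rfl⟩
      replace hz : ∑ j, z j * g1 j = 2 * p := hz
      have hub : p * (∑ j, z j) ≤ 2 * p :=
        length_lower (fun i => hip i (Finset.mem_univ i)) ⟨z, hz, rfl⟩
      have hle2 : (∑ j, z j) ≤ 2 := by
        have : p * (∑ j, z j) ≤ p * 2 := by omega
        exact Nat.le_of_mul_le_mul_left this hp0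
      have hne0 : (∑ j, z j) ≠ 0 := by
        intro hsum
        rw [Finset.sum_eq_zero_iff] at hsum
        have : ∑ j, z j * g1 j = 0 :=
          Finset.sum_eq_zero fun j hj => by rw [hsum j hj]; ring
        omega
      have hne1 : (∑ j, z j) ≠ 1 := by
        intro hsum
        obtain ⟨i, -, hi⟩ := Finset.exists_ne_zero_of_sum_ne_zero (by omega :
          (∑ j, z j) ≠ 0)
        have hsplit : ∑ j, z j = z i + ∑ j ∈ Finset.univ.erase i, z j :=
          (Finset.add_sum_erase _ _ (Finset.mem_univ i)).symm
        have hzi : z i = 1 ∧ ∀ j ∈ Finset.univ.erase i, z j = 0 := by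
          constructor
          · omega
          · intro j hj
            have h1 : ∑ j ∈ Finset.univ.erase i, z j = 0 := by omega
            rw [Finset.sum_eq_zero_iff] at h1
            exact h1 j hj
        have hgval : g1 i = 2 * p := by
          have hsplit2 : ∑ j, z j * g1 j = z i * g1 i + ∑ j ∈ Finset.univ.erase i, z j * g1 j :=
            (Finset.add_sum_erase _ _ (Finset.mem_univ i)).symm
          have hz0 : ∑ j ∈ Finset.univ.erase i, z j * g1 j = 0 :=
            Finset.sum_eq_zero fun j hj => by rw [hzi.2 j hj]; ring
          rw [hsplit2, hz0, hzi.1] at hz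
          omega
        have hipne : i ≠ ip := by
          intro hcon
          rw [hcon, ← hpdef] at hgval
          omega
        apply hmin1 i
        refine ⟨fun j => if j = ip then 2 else 0, ?_, ?_⟩
        · show (if i = ip then (2:ℕ) else 0) = 0
          rw [if_neg hipne]
        have : ∀ j, (if j = ip then 2 else 0) * g1 j = if j = ip then 2 * g1 ip else 0 := by
          intro j
          split_ifs with hj
          · rw [hj]
          · ring
        rw [Finset.sum_congr rfl (fun j _ => this j), Finset.sum_ite_eq' Finset.univ ip]
        simp [hgval, hpdef]
      show (∑ j, z j) = 2
      omega
    · rintro rfl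
      refine ⟨fun j => if j = ip then 2 else 0, ?_, ?_⟩
      · show ∑ j, (if j = ip then 2 else 0) * g1 j = 2 * p
        have : ∀ j, (if j = ip then 2 else 0) * g1 j = if j = ip then 2 * g1 ip else 0 := by
          intro j
          split_ifs with hj
          · rw [hj]
          · ring
        rw [Finset.sum_congr rfl (fun j _ => this j), Finset.sum_ite_eq' Finset.univ ip]
        simp [hpdef]
      · show ∑ j, (if j = ip then 2 else 0) = 2
        rw [Finset.sum_ite_eq' Finset.univ ip]
        simp
  -- element of S₂ congruent to 1 mod 2p
  obtain ⟨m, hm_mem, hm_mod⟩ := exists_mem_modeq g2 (2 * p) (by omega) Finset.univ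
  rw [hgcd2] at hm_mod
  have hm1 : m % (2 * p) = 1 := by
    have h1mod : (1 : ℤ) % ((2 * p : ℕ) : ℤ) = 1 := by
      apply Int.emod_eq_of_lt
      · omega
      · exact_mod_cast (by omega : (1:ℕ) < 2 * p)
    have h2 : (m : ℤ) % ((2 * p : ℕ) : ℤ) = 1 := by
      have := hm_mod
      rw [Int.ModEq] at this
      rw [this]
      exact_mod_cast h1mod
    have h3 : ((m % (2 * p) : ℕ) : ℤ) = 1 := by
      push_cast
      exact h2
    exact_mod_cast h3
  have hm_pos : 0 < m := by
    rcases Nat.eq_zero_or_pos m with rfl | h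
    · simp at hm1
    · exact h
  -- parameters
  set N₂ := Finset.univ.sup g2 with hN₂def
  have hN₂ : 0 < N₂ := lt_of_lt_of_le (hpos2 i0) (Finset.le_sup (Finset.mem_univ i0))
  set dd := max (r₁ * Finset.univ.sup g1) (r₂ * N₂) with hdd
  set T₀ := (dd + 3) * N₂ + 1 with hT₀
  set q0 := g2 i0 with hq0
  set q1 := g2 i1 with hq1
  have hq0pos : 0 < q0 := hpos2 i0
  have hq1pos : 0 < q1 := hpos2 i1
  set K := 2 * p * (q0 * q1) with hK
  have hKpos : 0 < K := by positivity
  set μf : ℕ → ℕ := fun t => m + (t + T₀ + 1) * K with hμf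
  apply Set.infinite_of_injective_forall_mem (f := fun t => ((2 * p, μf t) : ℕ × ℕ))
  · -- injectivity
    intro t s hts
    have h2 : μf t = μf s := congrArg Prod.snd hts
    simp only [hμf] at h2
    have h3 : (t + T₀ + 1) * K = (s + T₀ + 1) * K := by omega
    have h4 : t + T₀ + 1 = s + T₀ + 1 := Nat.eq_of_mul_eq_mul_right hKpos h3
    omega
  · intro t
    set μ := μf t with hμ
    have hμeq : μ = m + (t + T₀ + 1) * K := rfl
    have hCC : (t + T₀ + 1) * K = (2 * p * (t + T₀ + 1) * q1) * q0 := by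
      rw [hK]; ring
    have hCC' : (t + T₀ + 1) * K = (2 * p * (t + T₀ + 1) * q0) * q1 := by
      rw [hK]; ring
    have hμ_mem : mem g2 μ := by
      rw [hμeq, hCC]
      exact mem_add hm_mem (mem_mul_gen g2 _ i0)
    have hμ_big : (dd + 2) * N₂ < μ := by
      have h1 : T₀ + 1 ≤ (t + T₀ + 1) * K := by
        calc T₀ + 1 ≤ t + T₀ + 1 := by omega
        _ = (t + T₀ + 1) * 1 := by ring
        _ ≤ (t + T₀ + 1) * K := Nat.mul_le_mul_left _ hKpos
      have h2 : (dd + 2) * N₂ < (dd + 3) * N₂ + 1 := by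
        have : (dd + 2) * N₂ ≤ (dd + 3) * N₂ := Nat.mul_le_mul_right _ (by omega)
        omega
      rw [hμeq]
      omega
    refine ⟨⟨p, p, hp0, hp0, mem_gen g1 ip, mem_gen g1 ip, by rw [hpdef]; ring⟩, ?_, ?_, ?_⟩
    · -- NonAtom g2 μ
      have hCCpos : 0 < 2 * p * (t + T₀ + 1) * q1 := by positivity
      refine ⟨m + (2 * p * (t + T₀ + 1) * q1 - 1) * q0, q0, by omega, hq0pos, ?_,
        mem_gen g2 i0, ?_⟩
      · refine mem_add hm_mem ?_
        have := mem_mul_gen g2 (2 * p * (t + T₀ + 1) * q1 - 1) i0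
        rwa [← hq0] at this
      · have e1 : μ = m + (2 * p * (t + T₀ + 1) * q1) * q0 := by rw [hμeq, hCC]
        have e2 : (2 * p * (t + T₀ + 1) * q1 - 1) * q0 + q0
            = (2 * p * (t + T₀ + 1) * q1) * q0 := by
          have h3 : (2 * p * (t + T₀ + 1) * q1 - 1 + 1) * q0
              = (2 * p * (t + T₀ + 1) * q1 - 1) * q0 + q0 := by ring
          have h2 : 2 * p * (t + T₀ + 1) * q1 - 1 + 1 = 2 * p * (t + T₀ + 1) * q1 := by omega
          rw [h2] at h3
          omega
        omega
    · -- coprime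
      show Nat.Coprime (2 * p) μ
      have hmod : μ % (2 * p) = 1 := by
        have : μ = m + (2 * p) * ((t + T₀ + 1) * (q0 * q1)) := by rw [hμeq, hK]; ring
        rw [this, Nat.add_mul_mod_self_left]
        exact hm1
      rw [Nat.Coprime, Nat.gcd_rec, hmod, Nat.gcd_one_left]
    · -- Tasty
      show Tasty (Fin.append (fun i => μ * g1 i) (fun j => (2 * p) * g2 j))
      apply master hr₁ h0lt hpos1 hpos2 (by omega) (by omega) hμ_mem
      · show Nat.Coprime (2 * p) μ
        have hmod : μ % (2 * p) = 1 := by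
          have : μ = m + (2 * p) * ((t + T₀ + 1) * (q0 * q1)) := by rw [hμeq, hK]; ring
          rw [this, Nat.add_mul_mod_self_left]
          exact hm1
        rw [Nat.Coprime, Nat.gcd_rec, hmod, Nat.gcd_one_left]
      · exact hlamlen
      · -- two distinct lengths of μ
        obtain ⟨zm, hzm⟩ := hm_mem
        have hℓm : (∑ j, zm j) ∈ lengthSet g2 m := ⟨zm, hzm, rfl⟩
        refine ⟨(∑ j, zm j) + 2 * p * (t + T₀ + 1) * q1,
          (∑ j, zm j) + 2 * p * (t + T₀ + 1) * q0, ?_, ?_, ?_⟩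
        · have := length_add hℓm (length_mul_gen g2 (2 * p * (t + T₀ + 1) * q1) i0)
          rwa [← hq0, ← hCC, ← hμeq] at this
        · have := length_add hℓm (length_mul_gen g2 (2 * p * (t + T₀ + 1) * q0) i1)
          rwa [← hq1, ← hCC', ← hμeq] at this
        · intro hcon
          have h5 : 2 * p * (t + T₀ + 1) * q1 = 2 * p * (t + T₀ + 1) * q0 := by omega
          have h6 : q1 = q0 :=
            Nat.eq_of_mul_eq_mul_left (by positivity) h5
          exact hq01 h6.symm
      · -- all lengths of μ are large
        intro ℓ hℓ
        have hub := length_upper hℓ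
        rw [← hN₂def] at hub
        by_contra hcon
        push_neg at hcon
        rw [← hN₂def, ← hdd] at hcon
        have : ℓ * N₂ ≤ (dd + 2) * N₂ := Nat.mul_le_mul_right _ (by omega)
        omega

end LengthDensity
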